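/- Let α, β be injective partial endomorphisms of the path P_n. Then α and β are L-related in the monoid IEnd(P_n) (i.e., there exist γ, δ ∈ IEnd(P_n) with α = γ∘β-style composition α = γβ and β = δα) if and only if Im α = Im β and the composite partial map αβ⁻¹ is a partial automorphism of P_n. -/

import Mathlib

open scoped Classical

/-- `adj u v` means `|u - v| = 1`, i.e. `u` and `v` are adjacent in the path. -/
def adj (u v : ℕ) : Prop := u + 1 = v ∨ v + 1 = u

/-- `f` is an injective partial endomorphism of the path `P_n` on `{1,…,n}`. -/
structure IsIEnd (n : ℕ) (f : ℕ →. ℕ) : Prop where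
  dom_subset : f.Dom ⊆ Set.Icc 1 n
  ran_subset : f.ran ⊆ Set.Icc 1 n
  inj : ∀ ⦃x y a : ℕ⦄, a ∈ f x → a ∈ f y → x = y
  edge : ∀ ⦃u v a b : ℕ⦄, a ∈ f u → b ∈ f v → adj u v → adj a b

/-- `f` is a partial automorphism of the path `P_n`. -/
def IsPAut (n : ℕ) (f : ℕ →. ℕ) : Prop :=
  IsIEnd n f ∧ ∀ ⦃u v a b : ℕ⦄, a ∈ f u → b ∈ f v → adj a b → adj u v

/-- Left-to-right composition of partial maps: `x (pcomp f g) = (x f) g`. -/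
def pcomp (f g : ℕ →. ℕ) : ℕ →. ℕ := PFun.comp g f

/-- The inverse of an injective partial map. -/
noncomputable def pinv (f : ℕ →. ℕ) : ℕ →. ℕ :=
  fun y => ⟨∃ x, y ∈ f x, fun h => h.choose⟩

/-- `I` is an interval of `X`: a set of consecutive integers contained in `X`. -/
def IsIntervalOf (I X : Set ℕ) : Prop :=
  I ⊆ X ∧ ∀ ⦃x⦄, x ∈ I → ∀ ⦃y⦄, y ∈ I → ∀ ⦃z : ℕ⦄, x < z → z < y → z ∈ I

/-- `I` is a maximal interval of `X`. -/
def IsMaxIntervalOf (I X : Set ℕ) : Prop :=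
  IsIntervalOf I X ∧ ∀ J, IsIntervalOf J X → I ⊆ J → I = J


lemma mem_pinv {f : ℕ →. ℕ} (hf : ∀ ⦃x y a : ℕ⦄, a ∈ f x → a ∈ f y → x = y)
    {y a : ℕ} : a ∈ pinv f y ↔ y ∈ f a := by
  constructor
  · rintro ⟨h, rfl⟩
    exact h.choose_spec
  · intro h
    refine ⟨⟨a, h⟩, ?_⟩
    exact hf (Exists.choose_spec (⟨a, h⟩ : ∃ x, y ∈ f x)) h

lemma mem_pcomp {f g : ℕ →. ℕ} {x y : ℕ} :
    y ∈ pcomp f g x ↔ ∃ w, w ∈ f x ∧ y ∈ g w := by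
  simp [pcomp, PFun.comp_apply, Part.mem_bind_iff]
  exact Part.mem_bind_iff

lemma mem_phi {β : ℕ →. ℕ} (hβ : ∀ ⦃x y a : ℕ⦄, a ∈ β x → a ∈ β y → x = y)
    {α : ℕ →. ℕ} {x y : ℕ} :
    y ∈ pcomp α (pinv β) x ↔ ∃ w, w ∈ α x ∧ w ∈ β y := by
  rw [mem_pcomp]
  exact exists_congr fun w => and_congr_right fun _ => mem_pinv hβ

theorem stmt6 (n : ℕ) (α β : ℕ →. ℕ) (hα : IsIEnd n α) (hβ : IsIEnd n β) :
    (∃ γ δ : ℕ →. ℕ, IsIEnd n γ ∧ IsIEnd n δ ∧ α = pcomp γ β ∧ β = pcomp δ α) ↔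
    (α.ran = β.ran ∧ IsPAut n (pcomp α (pinv β))) := by
  have hmφ : ∀ {x y : ℕ}, y ∈ pcomp α (pinv β) x ↔ ∃ w, w ∈ α x ∧ w ∈ β y :=
    fun {x y} => mem_phi hβ.inj
  have hmψ : ∀ {x y : ℕ}, y ∈ pcomp β (pinv α) x ↔ ∃ w, w ∈ β x ∧ w ∈ α y :=
    fun {x y} => mem_phi hα.inj
  constructor
  · rintro ⟨γ, δ, hγ, hδ, hαγ, hβδ⟩
    have hmα : ∀ {x y : ℕ}, y ∈ α x ↔ ∃ w, w ∈ γ x ∧ y ∈ β w := by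
      intro x y; rw [hαγ]; exact mem_pcomp
    have hmβ : ∀ {x y : ℕ}, y ∈ β x ↔ ∃ w, w ∈ δ x ∧ y ∈ α w := by
      intro x y; rw [hβδ]; exact mem_pcomp
    have hran : α.ran = β.ran := by
      ext y
      simp only [PFun.ran, Set.mem_setOf_eq]
      constructor
      · rintro ⟨x, hx⟩
        obtain ⟨w, -, hw⟩ := hmα.mp hx
        exact ⟨w, hw⟩
      · rintro ⟨x, hx⟩
        obtain ⟨w, -, hw⟩ := hmβ.mp hx
        exact ⟨w, hw⟩
    refine ⟨hran, ⟨?_, ?_, ?_, ?_⟩, ?_⟩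
    · intro u hu
      obtain ⟨b, hb⟩ := (PFun.mem_dom _ _).mp hu
      obtain ⟨w, hw, -⟩ := hmφ.mp hb
      exact hα.dom_subset ((PFun.mem_dom _ _).mpr ⟨w, hw⟩)
    · rintro b ⟨u, hb⟩
      obtain ⟨w, -, hw⟩ := hmφ.mp hb
      exact hβ.dom_subset ((PFun.mem_dom _ _).mpr ⟨w, hw⟩)
    · intro x y a hx hy
      obtain ⟨w, hw, hw'⟩ := hmφ.mp hx
      obtain ⟨v, hv, hv'⟩ := hmφ.mp hy
      have : w = v := Part.mem_unique hw' hv'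
      subst this
      exact hα.inj hw hv
    · intro u v a b ha hb huv
      obtain ⟨w, hw, hw'⟩ := hmφ.mp ha
      obtain ⟨w2, hw2, hw2'⟩ := hmφ.mp hb
      obtain ⟨s, hs, hs'⟩ := hmα.mp hw
      obtain ⟨t, ht, ht'⟩ := hmα.mp hw2
      have hsa : s = a := hβ.inj hs' hw'
      have htb : t = b := hβ.inj ht' hw2'
      subst hsa; subst htb
      exact hγ.edge hs ht huv
    · intro u v a b ha hb hab
      obtain ⟨w, hw, hw'⟩ := hmφ.mp ha
      obtain ⟨w2, hw2, hw2'⟩ := hmφ.mp hb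
      obtain ⟨s, hs, hs'⟩ := hmβ.mp hw'
      obtain ⟨t, ht, ht'⟩ := hmβ.mp hw2'
      have hsu : s = u := hα.inj hs' hw
      have htv : t = v := hα.inj ht' hw2
      subst hsu; subst htv
      exact hδ.edge hs ht hab
  · rintro ⟨hran, hφ, hφ'⟩
    refine ⟨pcomp α (pinv β), pcomp β (pinv α), hφ, ⟨?_, ?_, ?_, ?_⟩, ?_, ?_⟩
    · intro u hu
      obtain ⟨b, hb⟩ := (PFun.mem_dom _ _).mp hu
      obtain ⟨w, hw, -⟩ := hmψ.mp hb
      exact hβ.dom_subset ((PFun.mem_dom _ _).mpr ⟨w, hw⟩)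
    · rintro b ⟨u, hb⟩
      obtain ⟨w, -, hw⟩ := hmψ.mp hb
      exact hα.dom_subset ((PFun.mem_dom _ _).mpr ⟨w, hw⟩)
    · intro x y a hx hy
      obtain ⟨w, hw, hw'⟩ := hmψ.mp hx
      obtain ⟨v, hv, hv'⟩ := hmψ.mp hy
      have : w = v := Part.mem_unique hw' hv'
      subst this
      exact hβ.inj hw hv
    · intro u v a b ha hb huv
      obtain ⟨w, hw, hw'⟩ := hmψ.mp ha
      obtain ⟨w2, hw2, hw2'⟩ := hmψ.mp hb
      exact hφ' (hmφ.mpr ⟨w, hw', hw⟩) (hmφ.mpr ⟨w2, hw2', hw2⟩) huv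
    · apply PFun.ext
      intro x y
      rw [mem_pcomp]
      constructor
      · intro hy
        have : y ∈ β.ran := hran ▸ ⟨x, hy⟩
        obtain ⟨u, hu⟩ := this
        exact ⟨u, hmφ.mpr ⟨y, hy, hu⟩, hu⟩
      · rintro ⟨u, h1, h2⟩
        obtain ⟨w, hw, hw'⟩ := hmφ.mp h1
        have : w = y := Part.mem_unique hw' h2
        subst this
        exact hw
    · apply PFun.ext
      intro x y
      rw [mem_pcomp]
      constructor
      · intro hy
        have : y ∈ α.ran := hran ▸ ⟨x, hy⟩
        obtain ⟨u, hu⟩ := this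
        exact ⟨u, hmψ.mpr ⟨y, hy, hu⟩, hu⟩
      · rintro ⟨u, h1, h2⟩
        obtain ⟨w, hw, hw'⟩ := hmψ.mp h1
        have : w = y := Part.mem_unique hw' h2
        subst this
        exact hw
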